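/- Let f : ℝⁿ × ℝᵐ → ℝ be twice continuously differentiable with L-Lipschitz gradient (L > 0). Consider exact alternating minimization iterates (x_k, y_k), and suppose they converge to a point (x̂, ŷ) that is a strict local minimum of f with ∇f(x̂, ŷ) = 0 and positive definite Hessian ∇²f(x̂, ŷ), and that f(x_k, y_k) > f* for all k, where f* = f(x̂, ŷ). Then there exist K_c ∈ ℕ and γ > 0 such that for all K ≥ K_c, f(x_K, y_K) − f* ≤ 1 / ( γ·(K − K_c) + (f(x_{K_c}, y_{K_c}) − f*)⁻¹ ); in particular the objective values converge at rate O(1/K). -/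

import Mathlib

open InnerProductSpace Metric

section Aux

variable {E : Type*} [NormedAddCommGroup E] [InnerProductSpace ℝ E] [CompleteSpace E]

lemma descent_lemma {f : E → ℝ} {L : ℝ} (hL : 0 ≤ L) (hf : Differentiable ℝ f)
    (hlip : ∀ p q, ‖gradient f p - gradient f q‖ ≤ L * ‖p - q‖) (p q : E) :
    f q ≤ f p + inner ℝ (gradient f p) (q - p) + L * ‖q - p‖ ^ 2 := by
  have key : ∀ z : E, (toDual ℝ E) (gradient f z) = fderiv ℝ f z := fun z =>
    LinearIsometryEquiv.apply_symm_apply _ _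
  have hb : ∀ z ∈ closedBall p ‖q - p‖, ‖fderiv ℝ f z - fderiv ℝ f p‖ ≤ L * ‖q - p‖ := by
    intro z hz
    rw [← key z, ← key p, ← map_sub, LinearIsometryEquiv.norm_map]
    exact (hlip z p).trans (mul_le_mul_of_nonneg_left (by simpa [dist_eq_norm] using hz) hL)
  have hmv := Convex.norm_image_sub_le_of_norm_fderiv_le' (fun z _ => hf z) hb
    (convex_closedBall p ‖q - p‖) (mem_closedBall_self (norm_nonneg _))
    (show q ∈ closedBall p ‖q - p‖ by simp [dist_eq_norm])
  have happ : (fderiv ℝ f p) (q - p) = inner ℝ (gradient f p) (q - p) := by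
    rw [← key p]; rfl
  rw [happ, Real.norm_eq_abs] at hmv
  have := (le_abs_self (f q - f p - inner ℝ (gradient f p) (q - p))).trans hmv
  nlinarith [norm_nonneg (q - p)]

lemma pos_def_bound [FiniteDimensional ℝ E] [Nontrivial E] (B : E →L[ℝ] E)
    (hB : ∀ v : E, v ≠ 0 → 0 < (inner ℝ (B v) v : ℝ)) :
    ∃ μ > (0:ℝ), ∀ v : E, μ * ‖v‖ ^ 2 ≤ inner ℝ (B v) v := by
  have hsne : (sphere (0:E) 1).Nonempty := NormedSpace.sphere_nonempty.mpr zero_le_one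
  have hcont : Continuous fun v : E => (inner ℝ (B v) v : ℝ) :=
    Continuous.inner B.continuous continuous_id
  obtain ⟨v₀, hv₀, hmin⟩ := (isCompact_sphere (0:E) 1).exists_isMinOn hsne hcont.continuousOn
  have hv₀norm : ‖v₀‖ = 1 := by simpa using hv₀
  have hv₀ne : v₀ ≠ 0 := by intro h; rw [h] at hv₀norm; simp at hv₀norm
  refine ⟨inner ℝ (B v₀) v₀, hB v₀ hv₀ne, fun v => ?_⟩
  rcases eq_or_ne v 0 with rfl | hv
  · simp
  · have hvn : (0:ℝ) < ‖v‖ := norm_pos_iff.mpr hv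
    have hun : ‖‖v‖⁻¹ • v‖ = 1 := by
      rw [norm_smul]; simp [abs_of_pos (inv_pos.mpr hvn), inv_mul_cancel₀ hvn.ne']
    have hmu : (inner ℝ (B v₀) v₀ : ℝ) ≤ inner ℝ (B (‖v‖⁻¹ • v)) (‖v‖⁻¹ • v) :=
      hmin (by simpa using hun)
    have hexp : (inner ℝ (B (‖v‖⁻¹ • v)) (‖v‖⁻¹ • v) : ℝ) = ‖v‖⁻¹ * (‖v‖⁻¹ * inner ℝ (B v) v) := by
      rw [map_smul, real_inner_smul_left, real_inner_smul_right]
    rw [hexp] at hmu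
    have h3 := mul_le_mul_of_nonneg_right hmu (sq_nonneg ‖v‖)
    have h4 : ‖v‖⁻¹ * (‖v‖⁻¹ * inner ℝ (B v) v) * ‖v‖ ^ 2 = inner ℝ (B v) v := by
      field_simp [sq]
    linarith

lemma gradient_contDiff {f : E → ℝ} (hf : ContDiff ℝ 2 f) : ContDiff ℝ 1 (gradient f) := by
  have : gradient f = fun z => (toDual ℝ E).symm (fderiv ℝ f z) := rfl
  rw [this]
  exact (toDual ℝ E).symm.toContinuousLinearEquiv.toContinuousLinearMap.contDiff.comp
    (hf.fderiv_right (by norm_num))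

lemma hess_inner {f : E → ℝ} (hf : ContDiff ℝ 2 f) (z v w : E) :
    (inner ℝ (fderiv ℝ (gradient f) z v) w : ℝ) = fderiv ℝ (fderiv ℝ f) z v w := by
  have hd2 : DifferentiableAt ℝ (fderiv ℝ f) z :=
    ((hf.fderiv_right (m := 1) (by norm_num)).differentiable (by norm_num)) z
  have hcomp : HasFDerivAt (gradient f)
      (((toDual ℝ E).symm.toContinuousLinearEquiv :
        StrongDual ℝ E ≃L[ℝ] E).toContinuousLinearMap.comp
        (fderiv ℝ (fderiv ℝ f) z)) z := by
    have : gradient f = fun z => (toDual ℝ E).symm (fderiv ℝ f z) := rfl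
    rw [this]
    exact (((toDual ℝ E).symm.toContinuousLinearEquiv :
      StrongDual ℝ E ≃L[ℝ] E).toContinuousLinearMap.hasFDerivAt).comp z hd2.hasFDerivAt
  rw [hcomp.fderiv]
  simp [toDual_symm_apply]

lemma hess_eq_iterated {f : E → ℝ} (hf : ContDiff ℝ 2 f) (z v : E) :
    (inner ℝ (fderiv ℝ (gradient f) z v) v : ℝ) = iteratedFDeriv ℝ 2 f z ![v, v] := by
  rw [hess_inner hf, iteratedFDeriv_two_apply]
  simp

lemma grad_lower {f : E → ℝ} {μ δ : ℝ} (hgdiff : Differentiable ℝ (gradient f)) (zhat : E)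
    (hgrad : gradient f zhat = 0)
    (hμ : ∀ v : E, μ * ‖v‖ ^ 2 ≤ inner ℝ (fderiv ℝ (gradient f) zhat v) v)
    (hδ : ∀ z ∈ ball zhat δ, ‖fderiv ℝ (gradient f) z - fderiv ℝ (gradient f) zhat‖ ≤ μ/2) :
    ∀ z ∈ ball zhat δ, μ/2 * ‖z - zhat‖ ≤ ‖gradient f z‖ := by
  intro z hz
  have hmv := Convex.norm_image_sub_le_of_norm_fderiv_le' (f := gradient f)
    (fun w _ => hgdiff w) hδ (convex_ball zhat δ)
    (mem_ball_self (lt_of_le_of_lt dist_nonneg hz)) hz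
  rw [hgrad, sub_zero] at hmv
  set w := z - zhat with hw
  set H := fderiv ℝ (gradient f) zhat with hH
  have h1 : μ * ‖w‖ ^ 2 ≤ ‖H w‖ * ‖w‖ := (hμ w).trans (real_inner_le_norm _ _)
  have h2 : ‖H w‖ ≤ ‖gradient f z‖ + ‖gradient f z - H w‖ := by
    have := norm_sub_le (gradient f z) (gradient f z - H w)
    simpa using this
  rcases eq_or_ne w 0 with h0 | h0
  · simp [h0]
  · have hwpos : 0 < ‖w‖ := norm_pos_iff.mpr h0
    have h3 : μ * ‖w‖ ≤ ‖H w‖ :=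
      (mul_le_mul_iff_left₀ hwpos).mp (by nlinarith [h1] : μ * ‖w‖ * ‖w‖ ≤ ‖H w‖ * ‖w‖)
    linarith [hmv]

end Aux

/-- Pairing of the two blocks of variables into the (L²) product space ℝⁿ × ℝᵐ. -/
noncomputable def pairL2 {n m : ℕ} (x : EuclideanSpace ℝ (Fin n)) (y : EuclideanSpace ℝ (Fin m)) :
    WithLp 2 (EuclideanSpace ℝ (Fin n) × EuclideanSpace ℝ (Fin m)) :=
  (WithLp.equiv 2 _).symm (x, y)

section PairFacts

variable {n m : ℕ}

lemma pair_add (a c : EuclideanSpace ℝ (Fin n)) (b d : EuclideanSpace ℝ (Fin m)) :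
    pairL2 a b + pairL2 c d = pairL2 (a + c) (b + d) := rfl

lemma pair_inner (a c : EuclideanSpace ℝ (Fin n)) (b d : EuclideanSpace ℝ (Fin m)) :
    (inner ℝ (pairL2 a b) (pairL2 c d) : ℝ) = inner ℝ a c + inner ℝ b d := rfl

lemma pair_surj (z : WithLp 2 (EuclideanSpace ℝ (Fin n) × EuclideanSpace ℝ (Fin m))) :
    z = pairL2 ((WithLp.equiv 2 _ z).1) ((WithLp.equiv 2 _ z).2) := rfl

end PairFacts

/-- **Theorem 2 (local convergence rate of alternating minimization).**
Let `f : ℝⁿ × ℝᵐ → ℝ` be C², with `L`-Lipschitz gradient (`L > 0`). Suppose exact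
alternating minimization iterates `(x k, y k)` converge to a strict local minimum
`(x̂, ŷ)` with vanishing gradient and positive definite Hessian, and
`f (x k, y k) > f* := f (x̂, ŷ)` for all `k`. Then there exist `Kc ∈ ℕ` and `γ > 0`
such that for all `K ≥ Kc`,
`f (x K, y K) − f* ≤ 1 / (γ (K − Kc) + (f (x Kc, y Kc) − f*)⁻¹)`. -/
theorem am_local_convergence_rate
    (n m : ℕ) (L : ℝ) (hL : 0 < L)
    (f : WithLp 2 (EuclideanSpace ℝ (Fin n) × EuclideanSpace ℝ (Fin m)) → ℝ)
    (hsmooth : ContDiff ℝ 2 f)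
    (hlip : ∀ p q, ‖gradient f p - gradient f q‖ ≤ L * ‖p - q‖)
    (x : ℕ → EuclideanSpace ℝ (Fin n)) (y : ℕ → EuclideanSpace ℝ (Fin m))
    (hy0 : ∀ y', f (pairL2 (x 0) (y 0)) ≤ f (pairL2 (x 0) y'))
    (hx : ∀ k : ℕ, ∀ x', f (pairL2 (x (k + 1)) (y k)) ≤ f (pairL2 x' (y k)))
    (hy : ∀ k : ℕ, ∀ y', f (pairL2 (x (k + 1)) (y (k + 1))) ≤ f (pairL2 (x (k + 1)) y'))
    (xhat : EuclideanSpace ℝ (Fin n)) (yhat : EuclideanSpace ℝ (Fin m))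
    (hconv : Filter.Tendsto (fun k => pairL2 (x k) (y k)) Filter.atTop (nhds (pairL2 xhat yhat)))
    (hstrict : ∃ ε > 0, ∀ z, z ≠ pairL2 xhat yhat → ‖z - pairL2 xhat yhat‖ < ε →
      f (pairL2 xhat yhat) < f z)
    (hgrad : gradient f (pairL2 xhat yhat) = 0)
    (hhess : ∀ v, v ≠ 0 → 0 < iteratedFDeriv ℝ 2 f (pairL2 xhat yhat) ![v, v])
    (hgt : ∀ k : ℕ, f (pairL2 xhat yhat) < f (pairL2 (x k) (y k))) :
    ∃ Kc : ℕ, ∃ γ > (0 : ℝ), ∀ K : ℕ, Kc ≤ K →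
      f (pairL2 (x K) (y K)) - f (pairL2 xhat yhat) ≤
        1 / (γ * ((K : ℝ) - (Kc : ℝ)) +
          (f (pairL2 (x Kc) (y Kc)) - f (pairL2 xhat yhat))⁻¹) := by
  classical
  by_cases hnt : Nontrivial (WithLp 2 (EuclideanSpace ℝ (Fin n) × EuclideanSpace ℝ (Fin m)))
  case neg =>
    have hss : Subsingleton (WithLp 2 (EuclideanSpace ℝ (Fin n) × EuclideanSpace ℝ (Fin m))) :=
      not_nontrivial_iff_subsingleton.mp hnt
    exact absurd (hgt 0)
      (by rw [Subsingleton.elim (pairL2 (x 0) (y 0)) (pairL2 xhat yhat)]; exact lt_irrefl _)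
  set zhat := pairL2 xhat yhat with hzhat
  set z := fun k => pairL2 (x k) (y k) with hz
  set w := fun k => pairL2 (x (k + 1)) (y k) with hwdef
  have hdf : Differentiable ℝ f := hsmooth.differentiable (by norm_num)
  have hgC1 : ContDiff ℝ 1 (gradient f) := gradient_contDiff hsmooth
  have hgdiff : Differentiable ℝ (gradient f) := hgC1.differentiable one_ne_zero
  have Hcont : Continuous (fderiv ℝ (gradient f)) := hgC1.continuous_fderiv one_ne_zero
  -- positive-definiteness of the Hessian as a bilinear bound
  have hB : ∀ v : WithLp 2 (EuclideanSpace ℝ (Fin n) × EuclideanSpace ℝ (Fin m)), v ≠ 0 → 0 < (inner ℝ (fderiv ℝ (gradient f) zhat v) v : ℝ) := by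
    intro v hv
    rw [hess_eq_iterated hsmooth]
    exact hhess v hv
  obtain ⟨μ, hμpos, hμ⟩ := pos_def_bound (fderiv ℝ (gradient f) zhat) hB
  -- choose δ so that the Hessian moves by at most μ/2 on the ball
  obtain ⟨δ, hδpos, hδ⟩ := Metric.continuousAt_iff.mp Hcont.continuousAt (μ/2) (half_pos hμpos)
  have hδ' : ∀ u ∈ ball zhat δ,
      ‖fderiv ℝ (gradient f) u - fderiv ℝ (gradient f) zhat‖ ≤ μ/2 := by
    intro u hu
    have := hδ (show dist u zhat < δ from hu)
    rw [dist_eq_norm] at this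
    exact this.le
  have hlow := grad_lower hgdiff zhat hgrad hμ hδ'
  -- PL inequality on the ball
  have hPL : ∀ u ∈ ball zhat δ, f u - f zhat ≤ (4*L/μ^2) * ‖gradient f u‖^2 := by
    intro u hu
    have hd := descent_lemma hL.le hdf hlip zhat u
    rw [hgrad, inner_zero_left, add_zero] at hd
    have hl := hlow u hu
    have hsq := mul_self_le_mul_self (by positivity : (0:ℝ) ≤ μ/2 * ‖u - zhat‖) hl
    have h1 : ‖u - zhat‖^2 ≤ (2/μ)^2 * ‖gradient f u‖^2 := by
      rw [← sub_nonneg]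
      have hid : (2/μ)^2 * ‖gradient f u‖^2 - ‖u - zhat‖^2 =
          (4/μ^2) * (‖gradient f u‖ * ‖gradient f u‖ -
            (μ/2 * ‖u - zhat‖) * (μ/2 * ‖u - zhat‖)) := by
        field_simp
        ring
      rw [hid]
      exact mul_nonneg (by positivity) (by linarith)
    calc f u - f zhat ≤ L * ‖u - zhat‖^2 := by linarith
      _ ≤ L * ((2/μ)^2 * ‖gradient f u‖^2) := mul_le_mul_of_nonneg_left h1 hL.le
      _ = 4*L/μ^2 * ‖gradient f u‖^2 := by field_simp; ring
  -- sufficient decrease at every step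
  have hdec : ∀ k : ℕ, f (z (k+1)) ≤ f (w k) - (1/(4*L)) * ‖gradient f (w k)‖^2 := by
    intro k
    set G := gradient f (w k) with hG
    set G1 := (WithLp.equiv 2 _ G).1 with hG1
    set G2 := (WithLp.equiv 2 _ G).2 with hG2
    -- the continuous linear inclusion of the first factor
    set T : EuclideanSpace ℝ (Fin n) →L[ℝ]
        WithLp 2 (EuclideanSpace ℝ (Fin n) × EuclideanSpace ℝ (Fin m)) :=
      ((WithLp.prodContinuousLinearEquiv 2 ℝ (EuclideanSpace ℝ (Fin n))
        (EuclideanSpace ℝ (Fin m))).symm.toContinuousLinearMap.comp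
        (ContinuousLinearMap.inl ℝ _ _)) with hT
    have hTapp : ∀ u, T u = pairL2 u 0 := by intro u; rfl
    have hAfun : (fun x' => pairL2 x' (y k)) = fun x' => T x' + pairL2 0 (y k) := by
      funext x'
      rw [hTapp, pair_add]
      simp [pairL2]
    have hA : HasFDerivAt (fun x' => pairL2 x' (y k)) T (x (k+1)) := by
      rw [hAfun]
      exact T.hasFDerivAt.add_const _
    have hmin : IsLocalMin (fun x' => f (pairL2 x' (y k))) (x (k+1)) :=
      Filter.Eventually.of_forall (fun x' => hx k x')
    have hcomp : HasFDerivAt (fun x' => f (pairL2 x' (y k)))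
        ((fderiv ℝ f (w k)).comp T) (x (k+1)) :=
      HasFDerivAt.comp _ (hdf (w k)).hasFDerivAt hA
    have hzero : (fderiv ℝ f (w k)).comp T = 0 := by
      rw [← hcomp.fderiv]; exact hmin.fderiv_eq_zero
    have hkey : ∀ u, (inner ℝ G (pairL2 u 0) : ℝ) = 0 := by
      intro u
      have h1 : fderiv ℝ f (w k) (T u) = 0 := by
        rw [← ContinuousLinearMap.comp_apply, hzero]; rfl
      have h2 : (toDual ℝ (WithLp 2 (EuclideanSpace ℝ (Fin n) × EuclideanSpace ℝ (Fin m)))) G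
          = fderiv ℝ f (w k) :=
        LinearIsometryEquiv.apply_symm_apply _ _
      rw [← hTapp u, ← h1, ← h2]; rfl
    have hG1zero : G1 = 0 := by
      have := hkey G1
      rw [pair_surj G] at this
      rw [pair_inner] at this
      simp only [inner_zero_right, add_zero] at this
      exact inner_self_eq_zero.mp this
    have hGeq : G = pairL2 0 G2 := by
      have hh := pair_surj G
      rw [← hG1, ← hG2] at hh
      rw [hh, hG1zero]
    -- the gradient step in the y variable
    set c : ℝ := 1/(2*L) with hc
    have hq := descent_lemma hL.le hdf hlip (w k) (w k + pairL2 0 (-c • G2))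
    rw [add_sub_cancel_left] at hq
    have hinner : (inner ℝ G (pairL2 0 (-c • G2)) : ℝ) = -c * ‖G2‖^2 := by
      rw [hGeq, pair_inner, inner_zero_left, zero_add, real_inner_smul_right,
        real_inner_self_eq_norm_sq]
    have hnorm : ‖pairL2 (0 : EuclideanSpace ℝ (Fin n)) (-c • G2)‖^2 = c^2 * ‖G2‖^2 := by
      rw [← real_inner_self_eq_norm_sq, pair_inner, inner_zero_left, zero_add,
        real_inner_smul_left, real_inner_smul_right, real_inner_self_eq_norm_sq]
      ring
    have hGnorm : ‖G‖^2 = ‖G2‖^2 := by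
      rw [hGeq, ← real_inner_self_eq_norm_sq, pair_inner, inner_zero_left, zero_add,
        real_inner_self_eq_norm_sq]
    have hstep : f (w k + pairL2 0 (-c • G2)) ≤ f (w k) - (1/(4*L)) * ‖G‖^2 := by
      rw [hinner, hnorm] at hq
      rw [hGnorm]
      have hc' : c = 1/(2*L) := rfl
      have hLne : L ≠ 0 := hL.ne'
      have : -c * ‖G2‖^2 + L * (c^2 * ‖G2‖^2) = -(1/(4*L)) * ‖G2‖^2 := by
        rw [hc']; field_simp; ring
      linarith [hq, this]
    have hwy : w k + pairL2 0 (-c • G2) = pairL2 (x (k+1)) (y k + -c • G2) := by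
      show pairL2 (x (k+1)) (y k) + pairL2 0 (-c • G2) = _
      rw [pair_add, add_zero]
    have := hy k (y k + -c • G2)
    rw [← hwy] at this
    exact this.trans hstep
  have hwz : ∀ k, f (w k) ≤ f (z k) := fun k => hx k (x k)
  have hzw : ∀ k, f (z (k+1)) ≤ f (w k) := by
    intro k
    have := hdec k
    have h0 : 0 ≤ 1/(4*L) * ‖gradient f (w k)‖^2 := by positivity
    linarith
  -- the intermediate points converge to zhat
  have hwconv : Filter.Tendsto w Filter.atTop (nhds zhat) := by
    have hproj : Continuous (fun u : WithLp 2 (EuclideanSpace ℝ (Fin n) × EuclideanSpace ℝ (Fin m)) =>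
        ((WithLp.prodContinuousLinearEquiv 2 ℝ (EuclideanSpace ℝ (Fin n))
          (EuclideanSpace ℝ (Fin m))) u)) :=
      (WithLp.prodContinuousLinearEquiv 2 ℝ _ _).continuous
    have hxt : Filter.Tendsto x Filter.atTop (nhds xhat) := by
      have := ((continuous_fst.comp hproj).tendsto zhat).comp hconv
      exact this
    have hyt : Filter.Tendsto y Filter.atTop (nhds yhat) := by
      have := ((continuous_snd.comp hproj).tendsto zhat).comp hconv
      exact this
    have hxt1 : Filter.Tendsto (fun k => x (k+1)) Filter.atTop (nhds xhat) :=
      hxt.comp (Filter.tendsto_add_atTop_nat 1)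
    have hpair : Continuous (fun p : (EuclideanSpace ℝ (Fin n)) × (EuclideanSpace ℝ (Fin m)) =>
        (pairL2 p.1 p.2)) :=
      (WithLp.prodContinuousLinearEquiv 2 ℝ _ _).symm.continuous
    exact (hpair.tendsto (xhat, yhat)).comp (hxt1.prodMk_nhds hyt)
  obtain ⟨Kc, hKc⟩ := Filter.eventually_atTop.mp (hwconv (ball_mem_nhds zhat hδpos))
  -- error sequence
  set e : ℕ → ℝ := fun k => f (z k) - f zhat with he
  clear_value e
  have hepos : ∀ k, 0 < e k := by
    intro k
    rw [he]
    exact sub_pos.mpr (hgt k)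
  set cc : ℝ := μ^2/(16*L^2) with hcc
  have hccpos : 0 < cc := by rw [hcc]; positivity
  clear_value cc
  have hrec : ∀ k, Kc ≤ k → e (k+1) * (1 + cc) ≤ e k := by
    intro k hk
    have hwball : w k ∈ ball zhat δ := hKc k hk
    have hPLw := hPL (w k) hwball
    have hd := hdec k
    have h1 : e (k+1) ≤ f (w k) - f zhat := by
      rw [he]
      exact sub_le_sub_right (hzw k) _
    have h2 : e k - e (k+1) ≥ (1/(4*L)) * ‖gradient f (w k)‖^2 := by
      have := hwz k
      simp only [he]
      linarith [hd]
    have h3 : ‖gradient f (w k)‖^2 ≥ (μ^2/(4*L)) * (f (w k) - f zhat) := by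
      have hden : 0 < 4*L/μ^2 := by positivity
      rw [ge_iff_le, div_mul_eq_mul_div, div_le_iff₀ (by positivity : (0:ℝ) < 4*L)]
      calc μ^2 * (f (w k) - f zhat) ≤ μ^2 * ((4*L/μ^2) * ‖gradient f (w k)‖^2) :=
            mul_le_mul_of_nonneg_left hPLw (by positivity)
        _ = ‖gradient f (w k)‖^2 * (4*L) := by field_simp
    have h4 : e k - e (k+1) ≥ cc * e (k+1) := by
      have h5 : (1/(4*L)) * ‖gradient f (w k)‖^2 ≥ (1/(4*L)) * ((μ^2/(4*L)) * e (k+1)) := by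
        apply mul_le_mul_of_nonneg_left _ (by positivity : (0:ℝ) ≤ 1/(4*L))
        calc (μ^2/(4*L)) * e (k+1) ≤ (μ^2/(4*L)) * (f (w k) - f zhat) :=
              mul_le_mul_of_nonneg_left h1 (by positivity)
          _ ≤ ‖gradient f (w k)‖^2 := h3
      have h6 : (1/(4*L)) * ((μ^2/(4*L)) * e (k+1)) = cc * e (k+1) := by
        have hc6 : (1/(4*L)) * (μ^2/(4*L)) = cc := by
          rw [hcc]; field_simp; ring
        rw [← mul_assoc, hc6]
      linarith
    linarith
  -- geometric decay
  have hgeo : ∀ N : ℕ, e (Kc + N) * (1 + cc)^N ≤ e Kc := by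
    intro N
    induction N with
    | zero => simp
    | succ N ih =>
      have hr := hrec (Kc + N) (Nat.le_add_right _ _)
      have hpow : (0:ℝ) < (1 + cc)^N := by positivity
      calc e (Kc + (N+1)) * (1 + cc)^(N+1)
          = (e (Kc + N + 1) * (1 + cc)) * (1 + cc)^N := by
            rw [← Nat.add_assoc, pow_succ]; ring
        _ ≤ e (Kc + N) * (1 + cc)^N := mul_le_mul_of_nonneg_right hr hpow.le
        _ ≤ e Kc := ih
  refine ⟨Kc, cc / e Kc, div_pos hccpos (hepos Kc), ?_⟩
  intro K hK
  obtain ⟨N, rfl⟩ : ∃ N, K = Kc + N := ⟨K - Kc, (Nat.add_sub_cancel' hK).symm⟩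
  have hbern : 1 + (N:ℝ) * cc ≤ (1 + cc)^N := one_add_mul_le_pow (by linarith) N
  have hp1 : (0:ℝ) < 1 + (N:ℝ) * cc :=
    add_pos_of_pos_of_nonneg one_pos (mul_nonneg (Nat.cast_nonneg N) hccpos.le)
  have h7 : e (Kc + N) * (1 + (N:ℝ) * cc) ≤ e Kc :=
    (mul_le_mul_of_nonneg_left hbern (hepos _).le).trans (hgeo N)
  have hee : ∀ j : ℕ, f (pairL2 (x j) (y j)) - f zhat = e j := by
    intro j; simp only [he, hz]
  rw [hee, hee]
  have hcast : ((Kc + N : ℕ) : ℝ) - (Kc : ℝ) = (N : ℝ) := by push_cast; ring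
  rw [hcast]
  have hne : e Kc ≠ 0 := (hepos Kc).ne'
  have hD : cc / e Kc * (N:ℝ) + (e Kc)⁻¹ = (1 + (N:ℝ) * cc) / e Kc := by
    field_simp
    ring
  rw [hD, one_div_div, le_div_iff₀ hp1]
  exact h7
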